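/- A quadratic symmetric polynomial matrix Q(y) = C + Σᵢ Lᵢyᵢ + Σᵢⱼ Qᵢⱼ yᵢyⱼ, with C, Lᵢ, Qᵢⱼ ∈ S^m and Qᵢⱼ = Qⱼᵢ, is uniformly PSD-SOS-convex provided the mℓ×mℓ block matrix [Qᵢⱼ]₁≤i,j≤ℓ is positive semidefinite. -/

import Mathlib

open MvPolynomial

private lemma stmt_3_lhs {l m : ℕ}
    (Cm : Matrix (Fin m) (Fin m) ℝ) (Lm : Fin l → Matrix (Fin m) (Fin m) ℝ)
    (Qb : Fin l → Fin l → Matrix (Fin m) (Fin m) ℝ)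
    (hQswap : ∀ i j, Qb i j = Qb j i)
    (i j : Fin l) :
        MvPolynomial.pderiv (σ := Fin m ⊕ Fin l) (Sum.inr i) (MvPolynomial.pderiv (Sum.inr j)
          (∑ a, ∑ b, MvPolynomial.X (Sum.inl a) * MvPolynomial.X (Sum.inl b) *
            MvPolynomial.rename Sum.inr
              (MvPolynomial.C (Cm a b)
                + (∑ i', MvPolynomial.C (Lm i' a b) * MvPolynomial.X i')
                + ∑ i', ∑ j', MvPolynomial.C (Qb i' j' a b) *
                    MvPolynomial.X i' * MvPolynomial.X j')))
    = ∑ a, ∑ b, MvPolynomial.C (2 * Qb i j a b) * MvPolynomial.X (Sum.inl a) *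
        MvPolynomial.X (Sum.inl b) := by
  simp only [map_add, map_sum, map_mul, rename_C, rename_X, pderiv_mul, pderiv_X,
    pderiv_C, Pi.single_apply]
  simp only [Sum.inr.injEq, Sum.inl.injEq, reduceCtorEq, if_false, mul_zero, zero_mul,
    add_zero, zero_add, mul_ite, ite_mul, mul_one, one_mul, map_zero,
    apply_ite (pderiv (σ := Fin m ⊕ Fin l) (Sum.inr i)), pderiv_one]
  refine Finset.sum_congr rfl fun a _ => Finset.sum_congr rfl fun b _ => ?_
  simp only [Finset.sum_add_distrib, Finset.sum_ite_eq, Finset.sum_ite_eq',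
    Finset.mem_univ, if_true, ite_self, Finset.sum_const_zero, mul_zero, zero_mul,
    add_zero, zero_add]
  rw [hQswap j i, show (2:ℝ) = 1 + 1 by norm_num, map_add, map_one]
  ring

/-- A quadratic symmetric polynomial matrix `Q(y) = C + Σᵢ Lᵢ yᵢ + Σᵢⱼ Qᵢⱼ yᵢ yⱼ`
is uniformly PSD-SOS-convex provided the block matrix `[Qᵢⱼ]` is positive semidefinite:
there is a polynomial matrix `F(v,y)` with `∇²_{yy}(vᵀQ(y)v) = F(v,y)ᵀF(v,y)`. -/
theorem stmt_3 {l m : ℕ}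
    (Cm : Matrix (Fin m) (Fin m) ℝ) (Lm : Fin l → Matrix (Fin m) (Fin m) ℝ)
    (Qb : Fin l → Fin l → Matrix (Fin m) (Fin m) ℝ)
    (hC : Cm.IsSymm) (hL : ∀ i, (Lm i).IsSymm) (hQsymm : ∀ i j, (Qb i j).IsSymm)
    (hQswap : ∀ i j, Qb i j = Qb j i)
    (hPSD : (Matrix.of fun p q : Fin l × Fin m => Qb p.1 q.1 p.2 q.2).PosSemidef) :
    ∃ (k : ℕ) (F : Matrix (Fin k) (Fin l) (MvPolynomial (Fin m ⊕ Fin l) ℝ)),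
      (Matrix.of fun i j : Fin l =>
        MvPolynomial.pderiv (Sum.inr i) (MvPolynomial.pderiv (Sum.inr j)
          (∑ a, ∑ b, MvPolynomial.X (Sum.inl a) * MvPolynomial.X (Sum.inl b) *
            MvPolynomial.rename Sum.inr
              (MvPolynomial.C (Cm a b)
                + (∑ i', MvPolynomial.C (Lm i' a b) * MvPolynomial.X i')
                + ∑ i', ∑ j', MvPolynomial.C (Qb i' j' a b) *
                    MvPolynomial.X i' * MvPolynomial.X j'))))
      = F.transpose * F := by
  classical
  obtain ⟨B, hB⟩ : ∃ B : Matrix (Fin l × Fin m) (Fin l × Fin m) ℝ,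
      (Matrix.of fun p q : Fin l × Fin m => Qb p.1 q.1 p.2 q.2) = B.conjTranspose * B := by
    open scoped MatrixOrder in
    refine ⟨CFC.sqrt (Matrix.of fun p q : Fin l × Fin m => Qb p.1 q.1 p.2 q.2), ?_⟩
    open scoped MatrixOrder in
    rw [← Matrix.star_eq_conjTranspose, (CFC.sqrt_nonneg _).isSelfAdjoint.star_eq,
      CFC.sqrt_mul_sqrt_self _ hPSD.nonneg]
  refine ⟨l * m, Matrix.of fun r jj => MvPolynomial.C (Real.sqrt 2) *
      ∑ a, MvPolynomial.C (B (finProdFinEquiv.symm r) (jj, a)) * MvPolynomial.X (Sum.inl a), ?_⟩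
  refine Matrix.ext fun i j => ?_
  rw [Matrix.of_apply, stmt_3_lhs Cm Lm Qb hQswap i j]
  have key : ∀ a b, (2:ℝ) * Qb i j a b =
      ∑ p : Fin l × Fin m, (Real.sqrt 2 * B p (i, a)) * (Real.sqrt 2 * B p (j, b)) := by
    intro a b
    have h2 : Real.sqrt 2 * Real.sqrt 2 = 2 := Real.mul_self_sqrt (by norm_num)
    have hE := congrFun (congrFun hB (i, a)) (j, b)
    simp only [Matrix.of_apply, Matrix.mul_apply, Matrix.conjTranspose_apply,
      star_trivial] at hE
    rw [hE, Finset.mul_sum]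
    refine Finset.sum_congr rfl fun p _ => ?_
    calc (2:ℝ) * (B p (i, a) * B p (j, b)) = (Real.sqrt 2 * Real.sqrt 2) *
          (B p (i, a) * B p (j, b)) := by rw [h2]
      _ = (Real.sqrt 2 * B p (i, a)) * (Real.sqrt 2 * B p (j, b)) := by ring
  rw [Matrix.mul_apply]
  simp only [Matrix.transpose_apply, Matrix.of_apply]
  rw [← Equiv.sum_comp finProdFinEquiv
    (fun r => (MvPolynomial.C (Real.sqrt 2) *
      ∑ a, MvPolynomial.C (B (finProdFinEquiv.symm r) (i, a)) * MvPolynomial.X (Sum.inl a)) *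
      (MvPolynomial.C (Real.sqrt 2) *
      ∑ b, MvPolynomial.C (B (finProdFinEquiv.symm r) (j, b)) * MvPolynomial.X (Sum.inl b)))]
  simp only [Equiv.symm_apply_apply]
  have hFF : ∀ p : Fin l × Fin m,
      ((MvPolynomial.C (Real.sqrt 2) : MvPolynomial (Fin m ⊕ Fin l) ℝ) *
        ∑ a, MvPolynomial.C (B p (i, a)) * MvPolynomial.X (Sum.inl a)) *
      (MvPolynomial.C (Real.sqrt 2) *
        ∑ b, MvPolynomial.C (B p (j, b)) * MvPolynomial.X (Sum.inl b))
      = ∑ a, ∑ b, MvPolynomial.C ((Real.sqrt 2 * B p (i, a)) * (Real.sqrt 2 * B p (j, b))) *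
          (MvPolynomial.X (Sum.inl a) * MvPolynomial.X (Sum.inl b)) := by
    intro p
    rw [Finset.mul_sum, Finset.mul_sum, Finset.sum_mul_sum]
    refine Finset.sum_congr rfl fun a _ => Finset.sum_congr rfl fun b _ => ?_
    simp only [map_mul]
    ring
  simp only [hFF]
  conv_rhs => rw [Finset.sum_comm]
  refine Finset.sum_congr rfl fun a _ => ?_
  conv_rhs => rw [Finset.sum_comm]
  refine Finset.sum_congr rfl fun b _ => ?_
  rw [← Finset.sum_mul, ← map_sum, ← key a b, mul_assoc]
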